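/- Let G be an abelian group containing an element g of order n ≥ 4. Set U = g^n and V = (−2g)·(2g) in B(G). Then U·V has exactly the two factorizations U·V and (g^{n−2}·(2g))·((−2g)·g^2), and consequently t(U·V, U) = 2. -/

import Mathlib

/-- A minimal zero-sum sequence over the abelian group `G`: a nonempty zero-sum
multiset none of whose proper nonempty sub-multisets has sum zero. -/
def IsMinZeroSum {G : Type*} [AddCommGroup G] (S : Multiset G) : Prop :=
  S ≠ 0 ∧ S.sum = 0 ∧ ∀ T ≤ S, T ≠ 0 → T.sum = 0 → T = S

/-- A factorization of a zero-sum sequence `B` into atoms of `B(G)`. -/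
def IsFactorization {G : Type*} [AddCommGroup G] (B : Multiset G)
    (z : Multiset (Multiset G)) : Prop :=
  (∀ A ∈ z, IsMinZeroSum A) ∧ z.sum = B

/-- The usual distance between two factorizations. -/
noncomputable def factDist {G : Type*} [AddCommGroup G] (z z' : Multiset (Multiset G)) : ℕ :=
  letI := Classical.decEq (Multiset G)
  max (z - z').card (z' - z).card

/-- The catenary degree of `B ∈ B(G)`: the least `N` such that any two factorizations
of `B` can be concatenated by a chain of factorizations with consecutive distances `≤ N`. -/
noncomputable def catenaryDeg {G : Type*} [AddCommGroup G] (B : Multiset G) : ℕ :=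
  sInf {N : ℕ | ∀ z z', IsFactorization B z → IsFactorization B z' →
    Relation.ReflTransGen (fun x y => IsFactorization B y ∧ factDist x y ≤ N) z z'}

/-- The tame degree `t(A, U)` of `A ∈ B(G)` with respect to the atom `U`. -/
noncomputable def tameDeg {G : Type*} [AddCommGroup G] (A U : Multiset G) : ℕ :=
  sInf {N : ℕ | ∀ z, IsFactorization A z →
    (∃ z', IsFactorization A z' ∧ U ∈ z') →
    ∃ z', IsFactorization A z' ∧ U ∈ z' ∧ factDist z z' ≤ N}

/-- The set of (positive) tame degrees of `B(G)`. -/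
noncomputable def TaSet (G : Type*) [AddCommGroup G] : Set ℕ :=
  {n | 0 < n ∧ ∃ A U : Multiset G, A.sum = 0 ∧ IsMinZeroSum U ∧ tameDeg A U = n}

/-- The Davenport constant of `G`: the supremum of lengths of minimal zero-sum sequences. -/
noncomputable def davenport (G : Type*) [AddCommGroup G] : ℕ :=
  sSup {n : ℕ | ∃ A : Multiset G, IsMinZeroSum A ∧ A.card = n}

namespace Stmt12Aux

open Multiset

lemma le_add_decomp {α : Type*} {A s t : Multiset α} (h : A ≤ s + t) :
    ∃ u v, u ≤ s ∧ v ≤ t ∧ A = u + v := by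
  classical
  exact ⟨A - t, A ∩ t, tsub_le_iff_right.2 h, inter_le_right,
    (Multiset.sub_add_inter A t).symm⟩

lemma le_replicate' {α : Type*} {u : Multiset α} {n : ℕ} {a : α}
    (h : u ≤ Multiset.replicate n a) : ∃ k ≤ n, u = Multiset.replicate k a := by
  refine ⟨u.card, by simpa using Multiset.card_le_card h, ?_⟩
  exact Multiset.eq_replicate_card.2 fun b hb => eq_of_mem_replicate (mem_of_le h hb)

lemma le_pair' {α : Type*} {v : Multiset α} {x y : α} (h : v ≤ ({x, y} : Multiset α)) :
    v = 0 ∨ v = {x} ∨ v = {y} ∨ v = {x, y} := by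
  have hc : v.card ≤ 2 := by simpa using Multiset.card_le_card h
  have h012 : v.card = 0 ∨ v.card = 1 ∨ v.card = 2 := by omega
  rcases h012 with h0 | h1 | h2
  · exact Or.inl (Multiset.card_eq_zero.mp h0)
  · obtain ⟨a, rfl⟩ := Multiset.card_eq_one.mp h1
    have ha : a ∈ ({x, y} : Multiset α) := mem_of_le h (by simp)
    rcases Multiset.mem_cons.mp ha with he | he
    · exact Or.inr (Or.inl (by rw [he]))
    · exact Or.inr (Or.inr (Or.inl (by rw [Multiset.mem_singleton.mp he])))
  · exact Or.inr (Or.inr (Or.inr (Multiset.eq_of_le_of_card_le h (by simp [h2]))))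

lemma le_sum_of_mem' {α : Type*} {M : Multiset (Multiset α)} {A : Multiset α}
    (h : A ∈ M) : A ≤ M.sum := by
  obtain ⟨t, rfl⟩ := Multiset.exists_cons_of_mem h
  rw [Multiset.sum_cons]
  exact le_self_add

lemma exists_mem_of_mem_sum {α : Type*} {M : Multiset (Multiset α)} {a : α}
    (h : a ∈ M.sum) : ∃ A ∈ M, a ∈ A := by
  induction M using Multiset.induction with
  | empty => simp at h
  | cons A t ih =>
    rw [Multiset.sum_cons, Multiset.mem_add] at h
    rcases h with h | h
    · exact ⟨A, Multiset.mem_cons_self _ _, h⟩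
    · obtain ⟨B, hB, hb⟩ := ih h
      exact ⟨B, Multiset.mem_cons_of_mem hB, hb⟩

variable {G : Type*} [AddCommGroup G] {g : G} {n : ℕ}

lemma hdvd (ho : addOrderOf g = n) {k : ℕ} (h : k • g = 0) : n ∣ k :=
  ho ▸ addOrderOf_dvd_iff_nsmul_eq_zero.2 h

lemma hg0 (hn : 4 ≤ n) (ho : addOrderOf g = n) : g ≠ 0 := by
  intro h; rw [h, addOrderOf_zero] at ho; omega

lemma h2g (hn : 4 ≤ n) (ho : addOrderOf g = n) : 2 • g ≠ 0 := by
  intro h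
  have := Nat.le_of_dvd (by norm_num) (hdvd ho h); omega

lemma hyg (hn : 4 ≤ n) (ho : addOrderOf g = n) : 2 • g ≠ g := by
  intro h
  apply hg0 hn ho
  rw [two_nsmul] at h
  exact add_eq_right.mp h

lemma hxg (hn : 4 ≤ n) (ho : addOrderOf g = n) : -(2 • g) ≠ g := by
  intro h
  have h3 : (3 : ℕ) • g = 0 := by
    have : (3 : ℕ) • g = 2 • g + g := by rw [show (3:ℕ) = 2 + 1 from rfl, add_nsmul, one_nsmul]
    rw [this]
    nth_rewrite 2 [← h]
    simp
  have := Nat.le_of_dvd (by norm_num) (hdvd ho h3); omega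

lemma n4_of_xy (hn : 4 ≤ n) (ho : addOrderOf g = n) (h : -(2 • g) = (2 : ℕ) • g) : n = 4 := by
  have h4 : (4 : ℕ) • g = 0 := by
    have : (4 : ℕ) • g = 2 • g + 2 • g := by rw [show (4:ℕ) = 2 + 2 from rfl, add_nsmul]
    rw [this]
    nth_rewrite 1 [← h]
    simp
  have := Nat.le_of_dvd (by norm_num) (hdvd ho h4); omega

lemma k_eq_n (hn : 4 ≤ n) {k : ℕ} (hk : k ≤ n + 2) (h0 : k ≠ 0) (h : n ∣ k) : k = n := by
  obtain ⟨c, rfl⟩ := h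
  rcases c with _ | _ | c
  · omega
  · omega
  · exfalso
    have h1 : n * 2 ≤ n * (c + 1 + 1) := Nat.mul_le_mul_left n (by omega)
    omega

lemma k2_of (hn : 4 ≤ n) (ho : addOrderOf g = n) {k : ℕ} (hk : k ≤ n)
    (h : k • g + -(2 • g) = 0) : k = 2 := by
  rcases Nat.lt_or_ge k 2 with h2 | h2
  · exfalso
    interval_cases k
    · apply h2g hn ho
      simpa using h.symm
    · apply hyg hn ho
      rw [one_nsmul] at h
      have := add_neg_eq_zero.mp h
      exact this.symm
  · have hsub : (k - 2) • g = 0 := by rw [sub_nsmul g h2]; exact h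
    have hd := hdvd ho hsub
    rcases Nat.eq_zero_or_pos (k - 2) with h0 | h0
    · omega
    · have := Nat.le_of_dvd h0 hd; omega

lemma Usum (ho : addOrderOf g = n) : (Multiset.replicate n g).sum = 0 := by
  rw [Multiset.sum_replicate, ← ho]; exact addOrderOf_nsmul_eq_zero g

omit [AddCommGroup G] in
lemma rep_ne_zero {k : ℕ} (hk : k ≠ 0) : (Multiset.replicate k g : Multiset G) ≠ 0 := by
  intro h
  have := congrArg Multiset.card h
  simp at this
  omega

lemma atom_classify (hn : 4 ≤ n) (ho : addOrderOf g = n) {A : Multiset G}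
    (hA : IsMinZeroSum A)
    (hle : A ≤ Multiset.replicate n g + {-(2 • g), 2 • g}) :
    A = Multiset.replicate n g ∨
    A = Multiset.replicate (n - 2) g + {2 • g} ∨
    A = Multiset.replicate 2 g + {-(2 • g)} ∨
    A = ({-(2 • g), 2 • g} : Multiset G) := by
  obtain ⟨u, v, hu, hv, rfl⟩ := le_add_decomp hle
  obtain ⟨k, hk, rfl⟩ := le_replicate' hu
  have hsum : k • g + v.sum = 0 := by
    have := hA.2.1
    rwa [Multiset.sum_add, Multiset.sum_replicate] at this
  rcases le_pair' hv with rfl | rfl | rfl | rfl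
  · -- v = 0
    left
    have hk0 : k ≠ 0 := by
      rintro rfl
      simpa using hA.1
    have hkn : k = n :=
      k_eq_n hn (by omega) hk0 (hdvd ho (by simpa using hsum))
    rw [hkn, add_zero]
  · -- v = {-(2•g)}
    right; right; left
    have hx : k • g + -(2 • g) = 0 := by simpa using hsum
    rw [k2_of hn ho hk hx]
  · -- v = {2•g}
    right; left
    have h' : (k + 2) • g = 0 := by
      rw [add_nsmul]
      simpa using hsum
    have hkn : k + 2 = n := k_eq_n hn (by omega) (by omega) (hdvd ho h')
    rw [show k = n - 2 by omega]
  · -- v = {-(2•g), 2•g}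
    have h0 : k • g = 0 := by
      have hv0 : ({-(2 • g), 2 • g} : Multiset G).sum = 0 := by simp
      rw [hv0, add_zero] at hsum
      exact hsum
    rcases Nat.eq_zero_or_pos k with rfl | hk0
    · right; right; right
      simp
    · exfalso
      have hmin := hA.2.2 (Multiset.replicate k g) le_self_add
        (rep_ne_zero (by omega)) (by rw [Multiset.sum_replicate]; exact h0)
      have := congrArg Multiset.card hmin
      simp at this
      omega

lemma atom_U (hn : 4 ≤ n) (ho : addOrderOf g = n) :
    IsMinZeroSum (Multiset.replicate n g : Multiset G) := by
  refine ⟨rep_ne_zero (by omega), Usum ho, fun T hT hT0 hTs => ?_⟩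
  obtain ⟨k, hk, rfl⟩ := le_replicate' hT
  have hk0 : k ≠ 0 := by rintro rfl; simp at hT0
  rw [Multiset.sum_replicate] at hTs
  rw [k_eq_n hn (by omega) hk0 (hdvd ho hTs)]

lemma atom_V (hn : 4 ≤ n) (ho : addOrderOf g = n) :
    IsMinZeroSum ({-(2 • g), 2 • g} : Multiset G) := by
  refine ⟨by simp, by simp, fun T hT hT0 hTs => ?_⟩
  rcases le_pair' hT with rfl | rfl | rfl | rfl
  · exact absurd rfl hT0
  · rw [Multiset.sum_singleton] at hTs
    exact absurd (neg_eq_zero.mp hTs) (h2g hn ho)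
  · rw [Multiset.sum_singleton] at hTs
    exact absurd hTs (h2g hn ho)
  · rfl

lemma atom_A1 (hn : 4 ≤ n) (ho : addOrderOf g = n) :
    IsMinZeroSum (Multiset.replicate (n - 2) g + ({2 • g} : Multiset G)) := by
  refine ⟨?_, ?_, fun T hT hT0 hTs => ?_⟩
  · intro h
    have := congrArg Multiset.card h
    simp at this
  · rw [Multiset.sum_add, Multiset.sum_replicate, Multiset.sum_singleton, ← add_nsmul,
      show n - 2 + 2 = n by omega, ← ho]
    exact addOrderOf_nsmul_eq_zero g
  · obtain ⟨u, v, hu, hv, rfl⟩ := le_add_decomp hT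
    obtain ⟨k, hk, rfl⟩ := le_replicate' hu
    rw [Multiset.sum_add, Multiset.sum_replicate] at hTs
    rcases Multiset.le_singleton.mp hv with rfl | rfl
    · exfalso
      have hk0 : k ≠ 0 := by rintro rfl; simp at hT0
      rw [Multiset.sum_zero, add_zero] at hTs
      have := Nat.le_of_dvd (by omega) (hdvd ho hTs)
      omega
    · rw [Multiset.sum_singleton] at hTs
      have h' : (k + 2) • g = 0 := by rw [add_nsmul]; exact hTs
      have hkn : k + 2 = n := k_eq_n hn (by omega) (by omega) (hdvd ho h')
      rw [show k = n - 2 by omega]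

lemma atom_A2 (hn : 4 ≤ n) (ho : addOrderOf g = n) :
    IsMinZeroSum (Multiset.replicate 2 g + ({-(2 • g)} : Multiset G)) := by
  refine ⟨?_, ?_, fun T hT hT0 hTs => ?_⟩
  · intro h
    have := congrArg Multiset.card h
    simp at this
  · rw [Multiset.sum_add, Multiset.sum_replicate, Multiset.sum_singleton]
    simp
  · obtain ⟨u, v, hu, hv, rfl⟩ := le_add_decomp hT
    obtain ⟨k, hk, rfl⟩ := le_replicate' hu
    rw [Multiset.sum_add, Multiset.sum_replicate] at hTs
    rcases Multiset.le_singleton.mp hv with rfl | rfl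
    · exfalso
      have hk0 : k ≠ 0 := by rintro rfl; simp at hT0
      rw [Multiset.sum_zero, add_zero] at hTs
      have := Nat.le_of_dvd (by omega) (hdvd ho hTs)
      omega
    · rw [Multiset.sum_singleton] at hTs
      rw [k2_of hn ho (by omega) hTs]


lemma B_eq (hn : 4 ≤ n) :
    Multiset.replicate n g + ({-(2 • g), 2 • g} : Multiset G) =
      (Multiset.replicate (n - 2) g + {2 • g}) + (Multiset.replicate 2 g + {-(2 • g)}) := by
  rw [add_add_add_comm, ← Multiset.replicate_add, show n - 2 + 2 = n by omega,
    Multiset.singleton_add]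
  congr 1
  exact (Multiset.cons_swap _ _ 0).symm

lemma fact_z1 (hn : 4 ≤ n) (ho : addOrderOf g = n) :
    IsFactorization (Multiset.replicate n g + {-(2 • g), 2 • g})
      ({Multiset.replicate n g, ({-(2 • g), 2 • g} : Multiset G)} : Multiset (Multiset G)) := by
  constructor
  · intro A hA
    rcases Multiset.mem_cons.mp hA with he | he
    · rw [he]; exact atom_U hn ho
    · rw [Multiset.mem_singleton.mp he]; exact atom_V hn ho
  · simp

lemma fact_z2 (hn : 4 ≤ n) (ho : addOrderOf g = n) :
    IsFactorization (Multiset.replicate n g + {-(2 • g), 2 • g})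
      ({Multiset.replicate (n - 2) g + {2 • g},
        Multiset.replicate 2 g + {-(2 • g)}} : Multiset (Multiset G)) := by
  constructor
  · intro A hA
    rcases Multiset.mem_cons.mp hA with he | he
    · rw [he]; exact atom_A1 hn ho
    · rw [Multiset.mem_singleton.mp he]; exact atom_A2 hn ho
  · rw [B_eq hn]
    simp

omit [AddCommGroup G] in
lemma cardU : Multiset.card (Multiset.replicate n g) = n := by simp
lemma cardA1 : Multiset.card (Multiset.replicate (n - 2) g + ({2 • g} : Multiset G)) = n - 2 + 1 := by simp
lemma cardA2 : Multiset.card (Multiset.replicate 2 g + ({-(2 • g)} : Multiset G)) = 3 := by simp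
lemma cardV : Multiset.card ({-(2 • g), 2 • g} : Multiset G) = 2 := by simp

lemma A1_eq_A2_of_n4 (hn : 4 ≤ n) (ho : addOrderOf g = n) (h : -(2 • g) = (2 : ℕ) • g) :
    Multiset.replicate (n - 2) g + ({2 • g} : Multiset G) =
      Multiset.replicate 2 g + ({-(2 • g)} : Multiset G) := by
  rw [n4_of_xy hn ho h, h]

lemma fact_classify (hn : 4 ≤ n) (ho : addOrderOf g = n) {z : Multiset (Multiset G)}
    (hz : IsFactorization (Multiset.replicate n g + {-(2 • g), 2 • g}) z) :
    z = ({Multiset.replicate n g, ({-(2 • g), 2 • g} : Multiset G)} : Multiset (Multiset G)) ∨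
    z = ({Multiset.replicate (n - 2) g + {2 • g},
          Multiset.replicate 2 g + {-(2 • g)}} : Multiset (Multiset G)) := by
  obtain ⟨hatom, hsum⟩ := hz
  have hAle : ∀ A ∈ z, A ≤ Multiset.replicate n g + {-(2 • g), 2 • g} :=
    fun A hA => hsum ▸ le_sum_of_mem' hA
  by_cases hV : ({-(2 • g), 2 • g} : Multiset G) ∈ z
  · left
    obtain ⟨t, rfl⟩ := Multiset.exists_cons_of_mem hV
    rw [Multiset.sum_cons] at hsum
    have hts : t.sum = Multiset.replicate n g := by
      have : ({-(2 • g), 2 • g} : Multiset G) + t.sum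
          = ({-(2 • g), 2 • g} : Multiset G) + Multiset.replicate n g := by
        rw [hsum, add_comm]
      exact add_left_cancel this
    have hUall : ∀ A ∈ t, A = Multiset.replicate n g := by
      intro A hA
      have hle : A ≤ Multiset.replicate n g := hts ▸ le_sum_of_mem' hA
      obtain ⟨k, hk, rfl⟩ := le_replicate' hle
      have hAatom := hatom _ (Multiset.mem_cons_of_mem hA)
      have hk0 : k ≠ 0 := by rintro rfl; exact hAatom.1 rfl
      have hs : k • g = 0 := by
        have := hAatom.2.1; rwa [Multiset.sum_replicate] at this
      rw [k_eq_n hn (by omega) hk0 (hdvd ho hs)]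
    have ht : t = Multiset.replicate t.card (Multiset.replicate n g) :=
      Multiset.eq_replicate_card.2 hUall
    have hcard : t.card * n = n := by
      have h1 : t.sum = Multiset.replicate (t.card * n) g := by
        conv_lhs => rw [ht]
        rw [Multiset.sum_replicate, Multiset.nsmul_replicate]
      rw [h1] at hts
      have := congrArg Multiset.card hts
      simpa using this
    have ht1 : t.card = 1 :=
      Nat.eq_of_mul_eq_mul_right (show 0 < n by omega) (hcard.trans (one_mul n).symm)
    rw [ht, ht1, Multiset.replicate_one]
    exact Multiset.cons_swap _ _ 0
  · -- V ∉ z : find A1 ∈ z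
    right
    have hyB : (2 : ℕ) • g ∈ Multiset.replicate n g + ({-(2 • g), 2 • g} : Multiset G) := by
      rw [Multiset.mem_add]
      right; simp
    obtain ⟨A, hAz, hyA⟩ := exists_mem_of_mem_sum (show (2:ℕ) • g ∈ z.sum by rw [hsum]; exact hyB)
    have hA1 : A = Multiset.replicate (n - 2) g + {2 • g} := by
      rcases atom_classify hn ho (hatom A hAz) (hAle A hAz) with rfl | rfl | rfl | rfl
      · exact absurd (Multiset.eq_of_mem_replicate hyA) (hyg hn ho)
      · rfl
      · rw [Multiset.mem_add] at hyA
        rcases hyA with hy | hy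
        · exact absurd (Multiset.eq_of_mem_replicate hy) (hyg hn ho)
        · have hxy : -(2 • g) = (2:ℕ) • g := (Multiset.mem_singleton.mp hy).symm
          exact (A1_eq_A2_of_n4 hn ho hxy).symm
      · exact absurd hAz hV
    subst hA1
    obtain ⟨t, rfl⟩ := Multiset.exists_cons_of_mem hAz
    rw [Multiset.sum_cons] at hsum
    have hts : t.sum = Multiset.replicate 2 g + {-(2 • g)} := by
      have : (Multiset.replicate (n - 2) g + ({2 • g} : Multiset G)) + t.sum
          = (Multiset.replicate (n - 2) g + ({2 • g} : Multiset G)) +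
            (Multiset.replicate 2 g + {-(2 • g)}) := by
        rw [hsum, B_eq hn]
      exact add_left_cancel this
    have hA2all : ∀ A' ∈ t, A' = Multiset.replicate 2 g + {-(2 • g)} := by
      intro A' hA'
      have hle2 : A' ≤ Multiset.replicate 2 g + {-(2 • g)} := hts ▸ le_sum_of_mem' hA'
      have hcard2 : Multiset.card A' ≤ 3 := by
        have := Multiset.card_le_card hle2
        simpa using this
      rcases atom_classify hn ho (hatom A' (Multiset.mem_cons_of_mem hA'))
          (hAle A' (Multiset.mem_cons_of_mem hA')) with rfl | rfl | rfl | rfl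
      · rw [cardU] at hcard2; omega
      · -- A' = A1 : card forces n = 4, then A1 = A2
        rw [cardA1] at hcard2
        have hy' : (2:ℕ) • g ∈ Multiset.replicate 2 g + ({-(2 • g)} : Multiset G) :=
          Multiset.mem_of_le hle2 (by rw [Multiset.mem_add]; right; simp)
        rw [Multiset.mem_add] at hy'
        rcases hy' with hy' | hy'
        · exact absurd (Multiset.eq_of_mem_replicate hy') (hyg hn ho)
        · exact A1_eq_A2_of_n4 hn ho (Multiset.mem_singleton.mp hy').symm
      · rfl
      · -- V ≤ A2 : impossible via count of -(2•g)
        exfalso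
        classical
        have hcount := Multiset.count_le_of_le (-(2 • g)) hle2
        rw [Multiset.count_add, Multiset.count_replicate, Multiset.count_singleton] at hcount
        have hy' : (2:ℕ) • g ∈ Multiset.replicate 2 g + ({-(2 • g)} : Multiset G) :=
          Multiset.mem_of_le hle2 (by simp)
        rw [Multiset.mem_add] at hy'
        rcases hy' with hy' | hy'
        · exact absurd (Multiset.eq_of_mem_replicate hy') (hyg hn ho)
        · have hxy : -(2 • g) = (2:ℕ) • g := (Multiset.mem_singleton.mp hy').symm
          rw [if_neg (Ne.symm (hxg hn ho)), if_pos rfl] at hcount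
          have : Multiset.count (-(2 • g)) ({-(2 • g), 2 • g} : Multiset G) = 2 := by
            rw [show ({-(2 • g), 2 • g} : Multiset G) = -(2•g) ::ₘ {2 • g} from rfl,
              Multiset.count_cons_self, Multiset.count_singleton, if_pos hxy]
          omega
    have ht : t = Multiset.replicate t.card (Multiset.replicate 2 g + {-(2 • g)}) :=
      Multiset.eq_replicate_card.2 hA2all
    have hcard : t.card = 1 := by
      have h1 : Multiset.card t.sum = t.card * 3 := by
        conv_lhs => rw [ht]
        rw [Multiset.sum_replicate, Multiset.card_nsmul]
        simp
      rw [hts] at h1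
      simp at h1
      omega
    rw [ht, hcard, Multiset.replicate_one]
    rfl

end Stmt12Aux

namespace Stmt12Aux

lemma factDist_le_max {G : Type*} [AddCommGroup G] (z z' : Multiset (Multiset G)) :
    factDist z z' ≤ max (Multiset.card z) (Multiset.card z') := by
  letI := Classical.decEq (Multiset G)
  unfold factDist
  exact max_le_max (Multiset.card_le_card tsub_le_self) (Multiset.card_le_card tsub_le_self)

lemma sub_pair_of_not_mem {α : Type*} [DecidableEq α] {s : Multiset α} {a b : α}
    (ha : a ∉ s) (hb : b ∉ s) : s - {a, b} = s := by
  have h : ({a, b} : Multiset α) = a ::ₘ b ::ₘ 0 := rfl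
  rw [h, Multiset.sub_cons, Multiset.sub_cons, Multiset.sub_zero,
    Multiset.erase_of_notMem ha, Multiset.erase_of_notMem hb]

end Stmt12Aux

theorem stmt12 (G : Type*) [AddCommGroup G] (g : G) (n : ℕ) (hn : 4 ≤ n)
    (ho : addOrderOf g = n) :
    (∀ z, IsFactorization (Multiset.replicate n g + {-(2 • g), 2 • g}) z ↔
      z = ({Multiset.replicate n g, ({-(2 • g), 2 • g} : Multiset G)} :
            Multiset (Multiset G)) ∨
      z = ({Multiset.replicate (n - 2) g + {2 • g},
            Multiset.replicate 2 g + {-(2 • g)}} : Multiset (Multiset G))) ∧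
    tameDeg (Multiset.replicate n g + {-(2 • g), 2 • g})
      (Multiset.replicate n g) = 2 := by
  letI := Classical.decEq (Multiset G)
  have hUneA1 : Multiset.replicate n g ≠ Multiset.replicate (n - 2) g + ({2 • g} : Multiset G) := by
    intro h
    have := congrArg Multiset.card h
    simp at this
    omega
  have hUneA2 : Multiset.replicate n g ≠ Multiset.replicate 2 g + ({-(2 • g)} : Multiset G) := by
    intro h
    have := congrArg Multiset.card h
    simp at this
    omega
  have hVneA1 : ({-(2 • g), 2 • g} : Multiset G) ≠ Multiset.replicate (n - 2) g + {2 • g} := by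
    intro h
    have := congrArg Multiset.card h
    simp at this
    omega
  have hVneA2 : ({-(2 • g), 2 • g} : Multiset G) ≠ Multiset.replicate 2 g + {-(2 • g)} := by
    intro h
    have := congrArg Multiset.card h
    simp at this
  have hUmem : Multiset.replicate n g ∈
      ({Multiset.replicate n g, ({-(2 • g), 2 • g} : Multiset G)} : Multiset (Multiset G)) := by
    exact Multiset.mem_cons_self _ _
  have hUnot : Multiset.replicate n g ∉
      ({Multiset.replicate (n - 2) g + {2 • g},
        Multiset.replicate 2 g + {-(2 • g)}} : Multiset (Multiset G)) := by
    intro h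
    rcases Multiset.mem_cons.mp h with he | he
    · exact hUneA1 he
    · exact hUneA2 (Multiset.mem_singleton.mp he)
  have hA1not : Multiset.replicate (n - 2) g + ({2 • g} : Multiset G) ∉
      ({Multiset.replicate n g, ({-(2 • g), 2 • g} : Multiset G)} : Multiset (Multiset G)) := by
    intro h
    rcases Multiset.mem_cons.mp h with he | he
    · exact hUneA1 he.symm
    · exact hVneA1 (Multiset.mem_singleton.mp he).symm
  have hA2not : Multiset.replicate 2 g + ({-(2 • g)} : Multiset G) ∉
      ({Multiset.replicate n g, ({-(2 • g), 2 • g} : Multiset G)} : Multiset (Multiset G)) := by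
    intro h
    rcases Multiset.mem_cons.mp h with he | he
    · exact hUneA2 he.symm
    · exact hVneA2 (Multiset.mem_singleton.mp he).symm
  have hcz1 : Multiset.card
      ({Multiset.replicate n g, ({-(2 • g), 2 • g} : Multiset G)} : Multiset (Multiset G)) = 2 :=
    Multiset.card_pair _ _
  have hcz2 : Multiset.card
      ({Multiset.replicate (n - 2) g + {2 • g},
        Multiset.replicate 2 g + {-(2 • g)}} : Multiset (Multiset G)) = 2 :=
    Multiset.card_pair _ _
  constructor
  · intro z
    constructor
    · exact fun hz => Stmt12Aux.fact_classify hn ho hz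
    · rintro (rfl | rfl)
      · exact Stmt12Aux.fact_z1 hn ho
      · exact Stmt12Aux.fact_z2 hn ho
  · have h2mem : (2 : ℕ) ∈ {N : ℕ | ∀ z,
        IsFactorization (Multiset.replicate n g + {-(2 • g), 2 • g}) z →
        (∃ z', IsFactorization (Multiset.replicate n g + {-(2 • g), 2 • g}) z' ∧
          Multiset.replicate n g ∈ z') →
        ∃ z', IsFactorization (Multiset.replicate n g + {-(2 • g), 2 • g}) z' ∧
          Multiset.replicate n g ∈ z' ∧ factDist z z' ≤ N} := by
      intro z hz _
      refine ⟨_, Stmt12Aux.fact_z1 hn ho, hUmem, ?_⟩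
      refine le_trans (Stmt12Aux.factDist_le_max _ _) ?_
      rcases Stmt12Aux.fact_classify hn ho hz with rfl | rfl
      · rw [hcz1]
        simp
      · rw [hcz1, hcz2]
        simp
    unfold tameDeg
    apply le_antisymm
    · exact Nat.sInf_le h2mem
    · refine le_csInf ⟨2, h2mem⟩ ?_
      intro N hN
      by_contra hlt
      push_neg at hlt
      obtain ⟨z', hz', hUz', hd⟩ := hN _ (Stmt12Aux.fact_z2 hn ho)
        ⟨_, Stmt12Aux.fact_z1 hn ho, hUmem⟩
      rcases Stmt12Aux.fact_classify hn ho hz' with rfl | rfl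
      · unfold factDist at hd
        have hsub : ({Multiset.replicate n g, ({-(2 • g), 2 • g} : Multiset G)} :
              Multiset (Multiset G)) -
            ({Multiset.replicate (n - 2) g + {2 • g},
              Multiset.replicate 2 g + {-(2 • g)}} : Multiset (Multiset G)) =
            ({Multiset.replicate n g, ({-(2 • g), 2 • g} : Multiset G)} :
              Multiset (Multiset G)) :=
          Stmt12Aux.sub_pair_of_not_mem hA1not hA2not
      -- hd : max (card (z2 - z1)) (card (z1 - z2)) ≤ N
        have h2le : Multiset.card
            (({Multiset.replicate n g, ({-(2 • g), 2 • g} : Multiset G)} :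
              Multiset (Multiset G)) -
             ({Multiset.replicate (n - 2) g + {2 • g},
              Multiset.replicate 2 g + {-(2 • g)}} : Multiset (Multiset G))) ≤ N :=
          le_trans (le_max_right _ _) hd
        rw [hsub, hcz1] at h2le
        omega
      · exact hUnot hUz'
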